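/- Under the same setting, the transformation 𝓛 is norm preserving: ∫_0¹ (𝓛ψ)²(t) dt = ∫_0¹ ψ²(t) dt for all ψ ∈ L²[0,1] for which the defining integrals converge. -/

import Mathlib

open MeasureTheory Set

lemma swapLem {q G : ℝ → ℝ} {b : ℝ}
    (hq : IntegrableOn q (Ioc 0 b)) (hG : IntegrableOn G (Ioc 0 b)) :
    ∫ t in Ioc (0:ℝ) b, G t * ∫ s in Ioc (0:ℝ) t, q s
      = ∫ s in Ioc (0:ℝ) b, q s * ∫ t in Ioc s b, G t := by
  set μ := volume.restrict (Ioc (0:ℝ) b) with hμ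
  set K : ℝ × ℝ → ℝ := fun p => indicator {p : ℝ × ℝ | p.2 ≤ p.1} (fun p => G p.1 * q p.2) p with hK
  have hKset : MeasurableSet {p : ℝ × ℝ | p.2 ≤ p.1} :=
    measurableSet_le measurable_snd measurable_fst
  have hKint : Integrable K (μ.prod μ) := (hG.mul_prod hq).indicator hKset
  have h1 : ∀ t ∈ Ioc (0:ℝ) b, (∫ s, K (t, s) ∂μ) = G t * ∫ s in Ioc (0:ℝ) t, q s := by
    intro t ht
    have : (fun s => K (t, s)) = (Iic t).indicator (fun s => G t * q s) := by
      funext s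
      simp only [hK, indicator_apply, mem_setOf_eq, mem_Iic]
    rw [this, integral_indicator measurableSet_Iic, hμ,
      Measure.restrict_restrict measurableSet_Iic]
    have hs : Iic t ∩ Ioc 0 b = Ioc 0 t := by
      ext s
      simp only [mem_inter_iff, mem_Iic, mem_Ioc, mem_setOf_eq]
      exact ⟨fun ⟨h1, h2, h3⟩ => ⟨h2, h1⟩, fun ⟨h1, h2⟩ => ⟨h2, h1, h2.trans ht.2⟩⟩
    rw [hs, integral_const_mul]
  have h2 : ∀ s ∈ Ioc (0:ℝ) b, (∫ t, K (t, s) ∂μ) = q s * ∫ t in Ioc s b, G t := by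
    intro s hs
    have : (fun t => K (t, s)) = (Ici s).indicator (fun t => G t * q s) := by
      funext t
      simp only [hK, indicator_apply, mem_setOf_eq, mem_Ici]
    rw [this, integral_indicator measurableSet_Ici, hμ,
      Measure.restrict_restrict measurableSet_Ici]
    have hss : Ici s ∩ Ioc 0 b = Icc s b := by
      ext t
      simp only [mem_inter_iff, mem_Ici, mem_Ioc, mem_Icc]
      exact ⟨fun ⟨h1, h2, h3⟩ => ⟨h1, h3⟩, fun ⟨h1, h2⟩ => ⟨h1, hs.1.trans_le h1, h2⟩⟩
    rw [hss, integral_Icc_eq_integral_Ioc, integral_mul_const, mul_comm]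
  calc ∫ t in Ioc (0:ℝ) b, G t * ∫ s in Ioc (0:ℝ) t, q s
      = ∫ t, (∫ s, K (t, s) ∂μ) ∂μ := by
        rw [hμ]
        exact (setIntegral_congr_fun measurableSet_Ioc (fun t ht => (h1 t ht).symm))
    _ = ∫ s, (∫ t, K (t, s) ∂μ) ∂μ :=
        MeasureTheory.integral_integral_swap hKint
    _ = ∫ s in Ioc (0:ℝ) b, q s * ∫ t in Ioc s b, G t := by
        rw [hμ]
        exact setIntegral_congr_fun measurableSet_Ioc (fun s hs => h2 s hs)

lemma prodFTC {f h : ℝ → ℝ} {b : ℝ}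
    (hf : IntegrableOn f (Ioc 0 b)) (hh : IntegrableOn h (Ioc 0 b))
    (hfH : IntegrableOn (fun s => f s * ∫ u in Ioc (0:ℝ) s, h u) (Ioc 0 b)) :
    (∫ s in Ioc (0:ℝ) b, f s) * (∫ s in Ioc (0:ℝ) b, h s)
      = (∫ s in Ioc (0:ℝ) b, f s * ∫ u in Ioc (0:ℝ) s, h u)
        + ∫ s in Ioc (0:ℝ) b, (∫ u in Ioc (0:ℝ) s, f u) * h s := by
  have hswap := swapLem (q := f) (G := h) hf hh
  have hsplit : ∀ s ∈ Ioc (0:ℝ) b, (∫ t in Ioc s b, h t)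
      = (∫ t in Ioc (0:ℝ) b, h t) - ∫ t in Ioc (0:ℝ) s, h t := by
    intro s hs
    have hunion : Ioc (0:ℝ) s ∪ Ioc s b = Ioc 0 b := Ioc_union_Ioc_eq_Ioc hs.1.le hs.2
    have := setIntegral_union (f := h) (μ := volume) (s := Ioc 0 s) (t := Ioc s b)
      (Ioc_disjoint_Ioc_of_le le_rfl) measurableSet_Ioc
      (hh.mono_set (hunion ▸ subset_union_left))
      (hh.mono_set (hunion ▸ subset_union_right))
    rw [hunion] at this
    linarith [this]
  have h2 : ∫ s in Ioc (0:ℝ) b, f s * ∫ t in Ioc s b, h t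
      = (∫ s in Ioc (0:ℝ) b, f s) * (∫ t in Ioc (0:ℝ) b, h t)
        - ∫ s in Ioc (0:ℝ) b, f s * ∫ u in Ioc (0:ℝ) s, h u := by
    rw [setIntegral_congr_fun measurableSet_Ioc
      (fun s hs => by rw [hsplit s hs, mul_sub] : EqOn _
        (fun s => f s * (∫ t in Ioc (0:ℝ) b, h t) - f s * ∫ u in Ioc (0:ℝ) s, h u) _),
      integral_sub (hf.mul_const _) hfH, integral_mul_const]
  have h3 : ∫ t in Ioc (0:ℝ) b, h t * ∫ s in Ioc (0:ℝ) t, f s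
      = ∫ s in Ioc (0:ℝ) b, (∫ u in Ioc (0:ℝ) s, f u) * h s :=
    setIntegral_congr_fun measurableSet_Ioc (fun s _ => mul_comm _ _)
  rw [h2] at hswap
  linarith [hswap, h3]

open MeasureTheory intervalIntegral

/-- Under the same setting as the martingale transform, `𝓛` is norm preserving:
`∫_0¹ (𝓛ψ)² dt = ∫_0¹ ψ² dt`. -/
theorem stmt10 {k : ℕ} (g : ℝ → Fin k → ℝ) (ψ : ℝ → ℝ)
    (hgm : ∀ i, Measurable fun t => g t i) (hψm : Measurable ψ)
    (hg2 : ∀ i j, IntervalIntegrable (fun t => g t i * g t j) volume 0 1)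
    (hψ2 : IntervalIntegrable (fun t => ψ t ^ 2) volume 0 1)
    (Γ : ℝ → Matrix (Fin k) (Fin k) ℝ)
    (hΓ : ∀ s, Γ s = fun i j => ∫ t in s..(1 : ℝ), g t i * g t j)
    (hΓinv : ∀ s ∈ Set.Ico (0 : ℝ) 1, IsUnit (Γ s))
    (Lψ : ℝ → ℝ)
    (hLψ : ∀ t, Lψ t =
      ψ t - ∑ j, (∫ s in (0 : ℝ)..t, ∑ i, ψ s * g s i * (Γ s)⁻¹ i j) * g t j)
    -- absolute convergence / Fubini justification:
    (hFub : ∀ i j l, IntegrableOn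
      (fun p : ℝ × ℝ => |ψ p.1 * g p.1 i * (Γ p.1)⁻¹ i l * g p.2 l * g p.2 j|)
      (Set.Ioc (0 : ℝ) 1 ×ˢ Set.Ioc (0 : ℝ) 1) volume)
    (hL2 : IntervalIntegrable (fun t => Lψ t ^ 2) volume 0 1) :
    ∫ t in (0 : ℝ)..1, Lψ t ^ 2 = ∫ t in (0 : ℝ)..1, ψ t ^ 2 := by
    classical
  have h01 : (0:ℝ) ≤ 1 := zero_le_one
  -- basic integrability on Ioc 0 1
  have hgg : ∀ i j, IntegrableOn (fun t => g t i * g t j) (Ioc 0 1) volume := fun i j =>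
    (intervalIntegrable_iff_integrableOn_Ioc_of_le h01).mp (hg2 i j)
  have hψ2' : IntegrableOn (fun t => ψ t ^ 2) (Ioc 0 1) volume :=
    (intervalIntegrable_iff_integrableOn_Ioc_of_le h01).mp hψ2
  -- Γ entries as a constant minus a primitive, hence continuous on [0,1]
  have hΓentry : ∀ i j, ∀ s ∈ Icc (0:ℝ) 1, Γ s i j
      = (∫ t in (0:ℝ)..1, g t i * g t j) - ∫ t in Ioc (0:ℝ) s, g t i * g t j := by
    intro i j s hs
    have h1 : IntervalIntegrable (fun t => g t i * g t j) volume 0 s :=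
      (hg2 i j).mono_set (by rw [uIcc_of_le hs.1, uIcc_of_le h01]; exact Icc_subset_Icc le_rfl hs.2)
    have h2 : IntervalIntegrable (fun t => g t i * g t j) volume s 1 :=
      (hg2 i j).mono_set (by rw [uIcc_of_le hs.2, uIcc_of_le h01]; exact Icc_subset_Icc hs.1 le_rfl)
    have hadd := intervalIntegral.integral_add_adjacent_intervals h1 h2
    have he : Γ s i j = ∫ t in s..(1:ℝ), g t i * g t j := by rw [hΓ s]
    rw [he, ← intervalIntegral.integral_of_le hs.1]
    linarith [hadd]
  have hΓcont : ∀ i j, ContinuousOn (fun s => Γ s i j) (Icc (0:ℝ) 1) := by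
    intro i j
    have hprim : ContinuousOn (fun x => ∫ t in Ioc (0:ℝ) x, g t i * g t j) (Icc (0:ℝ) 1) :=
      intervalIntegral.continuousOn_primitive ((integrableOn_Icc_iff_integrableOn_Ioc (a := (0:ℝ))).2 (hgg i j))
    exact (continuousOn_const.sub hprim).congr (fun s hs => hΓentry i j s hs)
  have aesmΓinv : ∀ i j,
      AEStronglyMeasurable (fun s => (Γ s)⁻¹ i j) (volume.restrict (Ioc (0:ℝ) 1)) := by
    intro i j
    have hΓmat : ContinuousOn (fun s => Γ s) (Icc (0:ℝ) 1) :=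
      continuousOn_pi.2 fun i => continuousOn_pi.2 fun j => hΓcont i j
    have hdet : ContinuousOn (fun s => (Γ s).det) (Icc (0:ℝ) 1) :=
      (Continuous.matrix_det continuous_id).comp_continuousOn hΓmat
    have hadj : ContinuousOn (fun s => (Γ s).adjugate i j) (Icc (0:ℝ) 1) := by
      have := (Continuous.matrix_adjugate (continuous_id (X := Matrix (Fin k) (Fin k) ℝ))).comp_continuousOn hΓmat
      exact continuousOn_pi.1 (continuousOn_pi.1 this i) j
    have h1 : AEMeasurable (fun s => (Γ s).det) (volume.restrict (Ioc (0:ℝ) 1)) :=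
      ((hdet.mono Ioc_subset_Icc_self).aestronglyMeasurable measurableSet_Ioc).aemeasurable
    have h2 : AEMeasurable (fun s => (Γ s).adjugate i j) (volume.restrict (Ioc (0:ℝ) 1)) :=
      ((hadj.mono Ioc_subset_Icc_self).aestronglyMeasurable measurableSet_Ioc).aemeasurable
    have he : (fun s => (Γ s)⁻¹ i j) = fun s => ((Γ s).det)⁻¹ * (Γ s).adjugate i j := by
      funext s
      rw [Matrix.inv_def, Ring.inverse_eq_inv']
      simp [Matrix.smul_apply, smul_eq_mul]
    rw [he]
    exact (h1.inv.mul h2).aestronglyMeasurable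
  -- the building blocks
  set F : Fin k → Fin k → ℝ → ℝ := fun i l s => ψ s * g s i * (Γ s)⁻¹ i l with hF_def
  set H : Fin k → ℝ → ℝ := fun l s => ∑ i, F i l s with hH_def
  set A : Fin k → ℝ → ℝ := fun l t => ∫ s in Ioc (0:ℝ) t, H l s with hA_def
  set S : ℝ → ℝ := fun t => ∑ l, A l t * g t l with hS_def
  have aesmF : ∀ i l, AEStronglyMeasurable (F i l) (volume.restrict (Ioc (0:ℝ) 1)) := by
    intro i l
    simp only [hF_def]
    exact ((hψm.aemeasurable.mul (hgm i).aemeasurable).mul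
      (aesmΓinv i l).aemeasurable).aestronglyMeasurable
  have aesmH : ∀ l, AEStronglyMeasurable (H l) (volume.restrict (Ioc (0:ℝ) 1)) := by
    intro l
    simp only [hH_def]
    exact Finset.aestronglyMeasurable_fun_sum _ (fun i _ => aesmF i l)
  -- positivity of ∫ g_l², from invertibility of Γ 0
  have hPpos : ∀ l, 0 < ∫ t in Ioc (0:ℝ) 1, g t l * g t l := by
    intro l
    rcases (setIntegral_nonneg measurableSet_Ioc
        (fun t _ => mul_self_nonneg (g t l))).lt_or_eq with h | h
    · exact h
    · exfalso
      have hae : (fun t => g t l * g t l) =ᵐ[volume.restrict (Ioc (0:ℝ) 1)] 0 :=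
        (integral_eq_zero_iff_of_nonneg (fun t => mul_self_nonneg (g t l)) (hgg l l)).mp h.symm
      have hrow : ∀ j, Γ 0 l j = 0 := by
        intro j
        have hzero : (fun t => g t l * g t j) =ᵐ[volume.restrict (Ioc (0:ℝ) 1)] 0 := by
          filter_upwards [hae] with t ht
          have hgl : g t l = 0 := mul_self_eq_zero.mp ht
          simp [hgl]
        have he : Γ 0 l j = ∫ t in (0:ℝ)..1, g t l * g t j := by rw [hΓ 0]
        rw [he, intervalIntegral.integral_of_le h01]
        exact integral_eq_zero_of_ae hzero
      have hdet0 : (Γ 0).det = 0 := Matrix.det_eq_zero_of_row_eq_zero l hrow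
      have hu := (Matrix.isUnit_iff_isUnit_det _).mp (hΓinv 0 ⟨le_rfl, zero_lt_one⟩)
      rw [hdet0] at hu
      exact not_isUnit_zero hu
  -- integrability of the F's (via the Fubini hypothesis)
  have hFint : ∀ i l, IntegrableOn (F i l) (Ioc (0:ℝ) 1) volume := by
    intro i l
    have hK : Integrable (fun p : ℝ × ℝ => |ψ p.1 * g p.1 i * (Γ p.1)⁻¹ i l * g p.2 l * g p.2 l|)
        ((volume.restrict (Ioc (0:ℝ) 1)).prod (volume.restrict (Ioc (0:ℝ) 1))) := by
      rw [Measure.prod_restrict, ← Measure.volume_eq_prod]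
      exact hFub i l l
    have hmarg : Integrable
        (fun s => ∫ t, |ψ s * g s i * (Γ s)⁻¹ i l * g t l * g t l|
            ∂(volume.restrict (Ioc (0:ℝ) 1)))
        (volume.restrict (Ioc (0:ℝ) 1)) := hK.integral_prod_left
    have heq : (fun s => ∫ t, |ψ s * g s i * (Γ s)⁻¹ i l * g t l * g t l|
            ∂(volume.restrict (Ioc (0:ℝ) 1)))
        = fun s => |F i l s| * ∫ t in Ioc (0:ℝ) 1, g t l * g t l := by
      funext s
      rw [← MeasureTheory.integral_const_mul]
      congr 1
      funext t
      rw [abs_mul, abs_mul, mul_assoc, abs_mul_abs_self]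
    rw [heq] at hmarg
    have hP := hPpos l
    have habs : Integrable (fun s => |F i l s|) (volume.restrict (Ioc (0:ℝ) 1)) := by
      have h2 := hmarg.mul_const (∫ t in Ioc (0:ℝ) 1, g t l * g t l)⁻¹
      have he2 : (fun s => (|F i l s| * ∫ t in Ioc (0:ℝ) 1, g t l * g t l)
          * (∫ t in Ioc (0:ℝ) 1, g t l * g t l)⁻¹) = fun s => |F i l s| := by
        funext s
        rw [mul_assoc, mul_inv_cancel₀ hP.ne', mul_one]
      rwa [he2] at h2
    have := (integrable_norm_iff (aesmF i l)).mp (by simpa [Real.norm_eq_abs] using habs)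
    exact this
  have hHint : ∀ l, IntegrableOn (H l) (Ioc (0:ℝ) 1) volume := by
    intro l
    simp only [hH_def]
    exact integrable_finset_sum _ (fun i _ => hFint i l)
  -- A is continuous, bounded
  have hAcont : ∀ l, ContinuousOn (A l) (Icc (0:ℝ) 1) := by
    intro l
    simp only [hA_def]
    exact intervalIntegral.continuousOn_primitive ((integrableOn_Icc_iff_integrableOn_Ioc (a := (0:ℝ))).2 (hHint l))
  have aesmA : ∀ l, AEStronglyMeasurable (A l) (volume.restrict (Ioc (0:ℝ) 1)) := fun l =>
    ((hAcont l).mono Ioc_subset_Icc_self).aestronglyMeasurable measurableSet_Ioc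
  set M : Fin k → ℝ := fun l => ∫ s in Ioc (0:ℝ) 1, |H l s| with hM_def
  have hAbd : ∀ l, ∀ t ∈ Icc (0:ℝ) 1, |A l t| ≤ M l := by
    intro l t ht
    simp only [hA_def, hM_def]
    calc |∫ s in Ioc (0:ℝ) t, H l s| ≤ ∫ s in Ioc (0:ℝ) t, |H l s| := by
          simpa [Real.norm_eq_abs] using
            norm_integral_le_integral_norm (μ := volume.restrict (Ioc (0:ℝ) t)) (H l)
      _ ≤ ∫ s in Ioc (0:ℝ) 1, |H l s| :=
          setIntegral_mono_set (hHint l).abs (ae_of_all _ fun s => abs_nonneg _)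
            (HasSubset.Subset.eventuallyLE (Ioc_subset_Ioc_right ht.2))
  set C : Fin k → Fin k → ℝ := fun j l => ∫ t in Ioc (0:ℝ) 1, |g t j * g t l| with hC_def
  have hΓIoc : ∀ j l, ∀ s ∈ Ioc (0:ℝ) 1, Γ s j l = ∫ t in Ioc s 1, g t j * g t l := by
    intro j l s hs
    rw [hΓ s]
    exact intervalIntegral.integral_of_le hs.2
  have hΓbd : ∀ j l, ∀ s ∈ Ioc (0:ℝ) 1, |Γ s j l| ≤ C j l := by
    intro j l s hs
    rw [hΓIoc j l s hs]
    simp only [hC_def]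
    calc |∫ t in Ioc s 1, g t j * g t l| ≤ ∫ t in Ioc s 1, |g t j * g t l| := by
          simpa only [Real.norm_eq_abs] using
            norm_integral_le_integral_norm (μ := volume.restrict (Ioc s 1)) (fun t => g t j * g t l)
      _ ≤ ∫ t in Ioc (0:ℝ) 1, |g t j * g t l| :=
          setIntegral_mono_set (hgg j l).abs (ae_of_all _ fun t => abs_nonneg _)
            (HasSubset.Subset.eventuallyLE (Ioc_subset_Ioc_left hs.1.le))
  -- integrable products
  have hψg : ∀ l, IntegrableOn (fun t => ψ t * g t l) (Ioc (0:ℝ) 1) volume := by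
    intro l
    refine Integrable.mono' ((hψ2'.add (hgg l l)).const_mul (1/2))
      (hψm.aestronglyMeasurable.mul (hgm l).aestronglyMeasurable)
      (ae_of_all _ fun t => ?_)
    rw [Real.norm_eq_abs, abs_mul]
    simp only [Pi.add_apply]
    nlinarith [sq_nonneg (|ψ t| - |g t l|), sq_abs (ψ t), abs_nonneg (ψ t),
      abs_nonneg (g t l), abs_mul_abs_self (g t l)]
  have hψAg : ∀ l, IntegrableOn (fun t => ψ t * (A l t * g t l)) (Ioc (0:ℝ) 1) volume := by
    intro l
    refine Integrable.mono' ((hψg l).abs.const_mul (M l))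
      (hψm.aestronglyMeasurable.mul ((aesmA l).mul (hgm l).aestronglyMeasurable))
      ((ae_restrict_iff' measurableSet_Ioc).2 (ae_of_all _ fun t ht => ?_))
    have h1 := hAbd l t (Ioc_subset_Icc_self ht)
    have h2 : |ψ t * (A l t * g t l)| = |A l t| * |ψ t * g t l| := by
      rw [abs_mul, abs_mul, abs_mul]; ring
    rw [Real.norm_eq_abs, h2]
    exact mul_le_mul_of_nonneg_right h1 (abs_nonneg _)
  have hAgAg : ∀ j l, IntegrableOn (fun t => (A j t * g t j) * (A l t * g t l))
      (Ioc (0:ℝ) 1) volume := by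
    intro j l
    refine Integrable.mono' ((hgg j l).abs.const_mul (M j * M l))
      (((aesmA j).mul (hgm j).aestronglyMeasurable).mul
        ((aesmA l).mul (hgm l).aestronglyMeasurable))
      ((ae_restrict_iff' measurableSet_Ioc).2 (ae_of_all _ fun t ht => ?_))
    have h1 := hAbd j t (Ioc_subset_Icc_self ht)
    have h2 := hAbd l t (Ioc_subset_Icc_self ht)
    have h3 : |A j t * g t j * (A l t * g t l)| = (|A j t| * |A l t|) * |g t j * g t l| := by
      rw [abs_mul, abs_mul, abs_mul, abs_mul]; ring
    rw [Real.norm_eq_abs, h3]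
    refine mul_le_mul_of_nonneg_right ?_ (abs_nonneg _)
    exact mul_le_mul h1 h2 (abs_nonneg _) ((abs_nonneg _).trans h1)
  have hHA : ∀ j l, IntegrableOn (fun s => H j s * A l s) (Ioc (0:ℝ) 1) volume := by
    intro j l
    refine Integrable.mono' ((hHint j).abs.const_mul (M l))
      ((aesmH j).mul (aesmA l))
      ((ae_restrict_iff' measurableSet_Ioc).2 (ae_of_all _ fun s hs => ?_))
    have h1 := hAbd l s (Ioc_subset_Icc_self hs)
    rw [Real.norm_eq_abs, abs_mul, mul_comm (|H j s|) (|A l s|)]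
    exact mul_le_mul_of_nonneg_right h1 (abs_nonneg _) |>.trans (le_of_eq (by ring))
  have hAH : ∀ j l, IntegrableOn (fun s => A j s * H l s) (Ioc (0:ℝ) 1) volume := by
    intro j l
    refine Integrable.mono' ((hHint l).abs.const_mul (M j))
      ((aesmA j).mul (aesmH l))
      ((ae_restrict_iff' measurableSet_Ioc).2 (ae_of_all _ fun s hs => ?_))
    have h1 := hAbd j s (Ioc_subset_Icc_self hs)
    rw [Real.norm_eq_abs, abs_mul]
    exact mul_le_mul_of_nonneg_right h1 (abs_nonneg _)
  have hQ : ∀ j l, IntegrableOn (fun s => H j s * A l s + A j s * H l s)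
      (Ioc (0:ℝ) 1) volume := fun j l => (hHA j l).add (hAH j l)
  have hQΓ : ∀ j l, IntegrableOn (fun s => (H j s * A l s + A j s * H l s) * Γ s j l)
      (Ioc (0:ℝ) 1) volume := by
    intro j l
    have haesmΓ : AEStronglyMeasurable (fun s => Γ s j l) (volume.restrict (Ioc (0:ℝ) 1)) :=
      ((hΓcont j l).mono Ioc_subset_Icc_self).aestronglyMeasurable measurableSet_Ioc
    refine Integrable.mono' ((hQ j l).abs.mul_const (C j l))
      (((aesmH j).mul (aesmA l)).add ((aesmA j).mul (aesmH l)) |>.mul haesmΓ)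
      ((ae_restrict_iff' measurableSet_Ioc).2 (ae_of_all _ fun s hs => ?_))
    rw [Real.norm_eq_abs, abs_mul]
    refine mul_le_mul_of_nonneg_left (hΓbd j l s hs) (abs_nonneg _) |>.trans (le_of_eq ?_)
    ring
  -- pointwise product formula
  have hAA : ∀ j l, ∀ t ∈ Ioc (0:ℝ) 1, A j t * A l t
      = ∫ s in Ioc (0:ℝ) t, (H j s * A l s + A j s * H l s) := by
    intro j l t ht
    have hsub : Ioc (0:ℝ) t ⊆ Ioc (0:ℝ) 1 := Ioc_subset_Ioc_right ht.2
    have h1 : IntegrableOn (H j) (Ioc (0:ℝ) t) volume := (hHint j).mono_set hsub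
    have h2 : IntegrableOn (H l) (Ioc (0:ℝ) t) volume := (hHint l).mono_set hsub
    have h3 : IntegrableOn (fun s => H j s * ∫ u in Ioc (0:ℝ) s, H l u) (Ioc (0:ℝ) t) volume := by
      have := (hHA j l).mono_set hsub
      simpa only [hA_def] using this
    have h4 : IntegrableOn (fun s => (∫ u in Ioc (0:ℝ) s, H j u) * H l s) (Ioc (0:ℝ) t) volume := by
      have := (hAH j l).mono_set hsub
      simpa only [hA_def] using this
    have hp := prodFTC h1 h2 h3
    simp only [hA_def]
    rw [hp, ← integral_add h3 h4]
  -- the per-pair Fubini identity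
  have hT : ∀ j l, ∫ t in Ioc (0:ℝ) 1, (A j t * g t j) * (A l t * g t l)
      = ∫ s in Ioc (0:ℝ) 1, (H j s * A l s + A j s * H l s) * Γ s j l := by
    intro j l
    have step1 : ∫ t in Ioc (0:ℝ) 1, (A j t * g t j) * (A l t * g t l)
        = ∫ t in Ioc (0:ℝ) 1, (g t j * g t l)
            * ∫ s in Ioc (0:ℝ) t, (H j s * A l s + A j s * H l s) :=
      setIntegral_congr_fun measurableSet_Ioc (fun t ht => by
        rw [← hAA j l t ht]; ring)
    have step2 := swapLem (q := fun s => H j s * A l s + A j s * H l s)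
      (G := fun t => g t j * g t l) (hQ j l) (hgg j l)
    have step3 : ∫ s in Ioc (0:ℝ) 1, (H j s * A l s + A j s * H l s)
          * ∫ t in Ioc s 1, g t j * g t l
        = ∫ s in Ioc (0:ℝ) 1, (H j s * A l s + A j s * H l s) * Γ s j l :=
      setIntegral_congr_fun measurableSet_Ioc (fun s hs => by rw [hΓIoc j l s hs])
    exact (step1.trans step2).trans step3
  -- the key identity ∫ S² = 2 ∫ ψ S
  have hψS : IntegrableOn (fun t => ψ t * S t) (Ioc (0:ℝ) 1) volume := by
    simp only [hS_def, Finset.mul_sum]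
    exact integrable_finset_sum _ (fun l _ => hψAg l)
  have hS2int : IntegrableOn (fun t => S t ^ 2) (Ioc (0:ℝ) 1) volume := by
    simp only [hS_def, sq, Finset.sum_mul_sum]
    exact integrable_finset_sum _ (fun j _ => integrable_finset_sum _ (fun l _ => hAgAg j l))
  have key : ∫ t in Ioc (0:ℝ) 1, S t ^ 2 = 2 * ∫ t in Ioc (0:ℝ) 1, ψ t * S t := by
    have e1 : ∫ t in Ioc (0:ℝ) 1, S t ^ 2
        = ∑ j, ∑ l, ∫ t in Ioc (0:ℝ) 1, (A j t * g t j) * (A l t * g t l) := by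
      simp only [hS_def, sq, Finset.sum_mul_sum]
      rw [integral_finset_sum _ (fun j _ => integrable_finset_sum _ fun l _ => hAgAg j l)]
      exact Finset.sum_congr rfl fun j _ => integral_finset_sum _ fun l _ => hAgAg j l
    have e2 : (∑ j, ∑ l, ∫ t in Ioc (0:ℝ) 1, (A j t * g t j) * (A l t * g t l))
        = ∑ j, ∑ l, ∫ s in Ioc (0:ℝ) 1, (H j s * A l s + A j s * H l s) * Γ s j l :=
      Finset.sum_congr rfl fun j _ => Finset.sum_congr rfl fun l _ => hT j l
    have e3 : ∫ s in Ioc (0:ℝ) 1, (∑ j, ∑ l, (H j s * A l s + A j s * H l s) * Γ s j l)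
        = ∑ j, ∑ l, ∫ s in Ioc (0:ℝ) 1, (H j s * A l s + A j s * H l s) * Γ s j l := by
      rw [integral_finset_sum _ (fun j _ => integrable_finset_sum _ fun l _ => hQΓ j l)]
      exact Finset.sum_congr rfl fun j _ => integral_finset_sum _ fun l _ => hQΓ j l
    have hone : ∀ᵐ s : ℝ ∂volume, s ≠ (1:ℝ) := by
      rw [ae_iff]
      have hset : {s : ℝ | ¬ s ≠ 1} = {1} := by ext x; simp [not_not]
      rw [hset]
      exact Real.volume_singleton
    have e4 : ∫ s in Ioc (0:ℝ) 1, (∑ j, ∑ l, (H j s * A l s + A j s * H l s) * Γ s j l)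
        = ∫ s in Ioc (0:ℝ) 1, 2 * (ψ s * S s) := by
      refine setIntegral_congr_ae measurableSet_Ioc ?_
      filter_upwards [hone] with s hs1 hsI
      have hsIco : s ∈ Ico (0:ℝ) 1 := ⟨hsI.1.le, lt_of_le_of_ne hsI.2 hs1⟩
      have hinv : (Γ s)⁻¹ * Γ s = 1 :=
        Matrix.nonsing_inv_mul _ ((Matrix.isUnit_iff_isUnit_det _).mp (hΓinv s hsIco))
      have hKl : ∀ l, ∑ j, H j s * Γ s j l = ψ s * g s l := by
        intro l
        simp only [hH_def, hF_def]
        calc ∑ j, (∑ i, ψ s * g s i * (Γ s)⁻¹ i j) * Γ s j l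
            = ∑ i, ψ s * g s i * ((Γ s)⁻¹ * Γ s) i l := by
              simp only [Finset.sum_mul, mul_assoc, ← Finset.mul_sum, Matrix.mul_apply]
              rw [Finset.sum_comm]
              congr 1
              refine Finset.sum_congr rfl fun i _ => ?_
              rw [Finset.mul_sum]
          _ = ψ s * g s l := by
              rw [hinv]
              simp [Matrix.one_apply]
      have hsym : ∀ j l, Γ s j l = Γ s l j := by
        intro j l
        rw [hΓ s]
        exact intervalIntegral.integral_congr fun t _ => mul_comm _ _
      have piece1 : ∑ j, ∑ l, (H j s * A l s) * Γ s j l = ∑ l, (ψ s * g s l) * A l s := by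
        rw [Finset.sum_comm]
        refine Finset.sum_congr rfl fun l _ => ?_
        rw [← hKl l, Finset.sum_mul]
        exact Finset.sum_congr rfl fun j _ => by ring
      have piece2 : ∑ j, ∑ l, (A j s * H l s) * Γ s j l = ∑ j, (ψ s * g s j) * A j s := by
        refine Finset.sum_congr rfl fun j _ => ?_
        rw [← hKl j, Finset.sum_mul]
        refine Finset.sum_congr rfl fun l _ => ?_
        rw [hsym j l]
        ring
      calc ∑ j, ∑ l, (H j s * A l s + A j s * H l s) * Γ s j l
          = (∑ j, ∑ l, (H j s * A l s) * Γ s j l)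
            + ∑ j, ∑ l, (A j s * H l s) * Γ s j l := by
            simp only [add_mul, Finset.sum_add_distrib]
        _ = (∑ l, (ψ s * g s l) * A l s) + ∑ j, (ψ s * g s j) * A j s := by
            rw [piece1, piece2]
        _ = 2 * (ψ s * S s) := by
            simp only [hS_def, Finset.mul_sum, ← Finset.sum_add_distrib]
            exact Finset.sum_congr rfl fun l _ => by ring
    rw [e1, e2, ← e3, e4, MeasureTheory.integral_const_mul]
  -- final assembly
  have hLS : ∀ t ∈ Ioc (0:ℝ) 1, Lψ t = ψ t - S t := by
    intro t ht
    rw [hLψ t]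
    simp only [hS_def]
    congr 1
    refine Finset.sum_congr rfl fun j _ => ?_
    congr 1
    rw [intervalIntegral.integral_of_le ht.1.le]
  rw [intervalIntegral.integral_of_le h01, intervalIntegral.integral_of_le h01]
  calc ∫ t in Ioc (0:ℝ) 1, Lψ t ^ 2
      = ∫ t in Ioc (0:ℝ) 1, (ψ t ^ 2 - 2 * (ψ t * S t) + S t ^ 2) :=
        setIntegral_congr_fun measurableSet_Ioc (fun t ht => by rw [hLS t ht]; ring)
    _ = ((∫ t in Ioc (0:ℝ) 1, ψ t ^ 2) - ∫ t in Ioc (0:ℝ) 1, 2 * (ψ t * S t))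
          + ∫ t in Ioc (0:ℝ) 1, S t ^ 2 := by
        have h1 : Integrable (fun t => ψ t ^ 2 - 2 * (ψ t * S t))
            (volume.restrict (Ioc (0:ℝ) 1)) := hψ2'.sub ((hψS).const_mul 2)
        have h2 : Integrable (fun t => 2 * (ψ t * S t))
            (volume.restrict (Ioc (0:ℝ) 1)) := (hψS).const_mul 2
        rw [integral_add (f := fun t => ψ t ^ 2 - 2 * (ψ t * S t))
            (g := fun t => S t ^ 2) h1 hS2int,
          integral_sub (f := fun t => ψ t ^ 2) (g := fun t => 2 * (ψ t * S t)) hψ2' h2]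
    _ = ∫ t in Ioc (0:ℝ) 1, ψ t ^ 2 := by
        rw [key, MeasureTheory.integral_const_mul]
        ring
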